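/- Let a₁, a₂ ∈ C^α([0,1]) (for some 1/2 < α ≤ 1) with a₁(0) = a₂(0), and let g₁, g₂ ∈ L²((0,1)) satisfy ∫₀¹ |g₁(t) - g₂(t)|² dt/t < ∞. Then ∫₀¹ |a₁(t)g₁(t) - a₂(t)g₂(t)|² dt/t < ∞, with the quantitative bound ∫₀¹ |a₁g₁ - a₂g₂|² dt/t ≤ 4([a₁]_α² + [a₂]_α²) ‖g₁‖²_{L²} + 2‖a₂‖²_∞ ∫₀¹ |g₁ - g₂|² dt/t. -/
import Mathlib


open MeasureTheory

/-- the first-order compatibility condition is preserved under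
multiplication by Hölder functions agreeing at the vertex, with a quantitative bound. -/
theorem stmt_4 (α H₁ H₂ A₂ : ℝ) (hα : 1/2 < α) (hα1 : α ≤ 1)
    (a₁ a₂ g₁ g₂ : ℝ → ℝ)
    (h1 : ∀ x ∈ Set.Icc (0:ℝ) 1, ∀ y ∈ Set.Icc (0:ℝ) 1, |a₁ x - a₁ y| ≤ H₁ * |x - y| ^ α)
    (h2 : ∀ x ∈ Set.Icc (0:ℝ) 1, ∀ y ∈ Set.Icc (0:ℝ) 1, |a₂ x - a₂ y| ≤ H₂ * |x - y| ^ α)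
    (hA₂ : ∀ t ∈ Set.Icc (0:ℝ) 1, |a₂ t| ≤ A₂)
    (h0 : a₁ 0 = a₂ 0)
    (hm1 : Measurable a₁) (hm2 : Measurable a₂)
    (hg1m : Measurable g₁) (hg2m : Measurable g₂)
    (hg1 : IntegrableOn (fun t => (g₁ t)^2) (Set.Ioo 0 1))
    (hcomp : IntegrableOn (fun t => (g₁ t - g₂ t)^2 / t) (Set.Ioo 0 1)) :
    IntegrableOn (fun t => (a₁ t * g₁ t - a₂ t * g₂ t)^2 / t) (Set.Ioo 0 1) ∧
    ∫ t in Set.Ioo (0:ℝ) 1, (a₁ t * g₁ t - a₂ t * g₂ t)^2 / t ≤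
      4 * (H₁^2 + H₂^2) * (∫ t in Set.Ioo (0:ℝ) 1, (g₁ t)^2) +
      2 * A₂^2 * ∫ t in Set.Ioo (0:ℝ) 1, (g₁ t - g₂ t)^2 / t := by
  set f : ℝ → ℝ := fun t => (a₁ t * g₁ t - a₂ t * g₂ t)^2 / t with hf
  set B : ℝ → ℝ := fun t => 4 * (H₁^2 + H₂^2) * (g₁ t)^2
      + 2 * A₂^2 * ((g₁ t - g₂ t)^2 / t) with hB
  have hBint : IntegrableOn B (Set.Ioo 0 1) :=
    (hg1.const_mul _).add (hcomp.const_mul _)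
  -- pointwise bound
  have key : ∀ t ∈ Set.Ioo (0:ℝ) 1, f t ≤ B t := by
    intro t ht
    obtain ⟨ht0, ht1⟩ := ht
    have htIcc : t ∈ Set.Icc (0:ℝ) 1 := ⟨ht0.le, ht1.le⟩
    have h0Icc : (0:ℝ) ∈ Set.Icc (0:ℝ) 1 := ⟨le_refl _, by norm_num⟩
    have habs : |t - 0| = t := by rw [sub_zero, abs_of_pos ht0]
    have hd : |a₁ t - a₂ t| ≤ (H₁ + H₂) * t ^ α := by
      calc |a₁ t - a₂ t| = |(a₁ t - a₁ 0) - (a₂ t - a₂ 0)| := by rw [h0]; ring_nf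
        _ ≤ |a₁ t - a₁ 0| + |a₂ t - a₂ 0| := abs_sub _ _
        _ ≤ H₁ * |t - 0| ^ α + H₂ * |t - 0| ^ α := add_le_add (h1 t htIcc 0 h0Icc) (h2 t htIcc 0 h0Icc)
        _ = (H₁ + H₂) * t ^ α := by rw [habs]; ring
    have htα : t ^ α * t ^ α ≤ t := by
      have h2a : t ^ α * t ^ α = t ^ (2*α) := by
        rw [← Real.rpow_add ht0]; ring_nf
      rw [h2a]
      calc t ^ (2*α) ≤ t ^ (1:ℝ) := by
            apply Real.rpow_le_rpow_of_exponent_ge ht0 ht1.le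
            linarith
        _ = t := Real.rpow_one t
    have hd2 : (a₁ t - a₂ t)^2 ≤ (H₁ + H₂)^2 * t := by
      have h1' : (a₁ t - a₂ t)^2 ≤ ((H₁ + H₂) * t ^ α)^2 := by
        rw [← sq_abs (a₁ t - a₂ t)]
        apply pow_le_pow_left₀ (abs_nonneg _) hd
      have h2' : ((H₁ + H₂) * t ^ α)^2 ≤ (H₁ + H₂)^2 * t := by
        have : ((H₁ + H₂) * t ^ α)^2 = (H₁ + H₂)^2 * (t ^ α * t ^ α) := by ring
        rw [this]
        exact mul_le_mul_of_nonneg_left htα (sq_nonneg _)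
      linarith
    have hb2 : (a₂ t)^2 ≤ A₂^2 := by
      rw [← sq_abs (a₂ t)]
      apply pow_le_pow_left₀ (abs_nonneg _) (hA₂ t htIcc)
    -- multiply out
    have hmain : (a₁ t * g₁ t - a₂ t * g₂ t)^2 ≤
        (4 * (H₁^2 + H₂^2) * (g₁ t)^2) * t + 2 * A₂^2 * (g₁ t - g₂ t)^2 := by
      nlinarith [sq_nonneg ((a₁ t - a₂ t) * g₁ t - a₂ t * (g₁ t - g₂ t)),
        mul_le_mul_of_nonneg_right hd2 (sq_nonneg (g₁ t)),
        mul_le_mul_of_nonneg_right hb2 (sq_nonneg (g₁ t - g₂ t)),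
        sq_nonneg (H₁ - H₂), mul_nonneg (mul_nonneg ht0.le (sq_nonneg (H₁ - H₂))) (sq_nonneg (g₁ t))]

    simp only [hf, hB]
    rw [div_le_iff₀ ht0]
    calc (a₁ t * g₁ t - a₂ t * g₂ t)^2
        ≤ (4 * (H₁^2 + H₂^2) * (g₁ t)^2) * t + 2 * A₂^2 * (g₁ t - g₂ t)^2 := hmain
      _ = (4 * (H₁^2 + H₂^2) * (g₁ t)^2 + 2 * A₂^2 * ((g₁ t - g₂ t)^2 / t)) * t := by
          field_simp
  have hfnonneg : ∀ t ∈ Set.Ioo (0:ℝ) 1, 0 ≤ f t := by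
    intro t ht
    exact div_nonneg (sq_nonneg _) ht.1.le
  have hfmeas : AEStronglyMeasurable f (volume.restrict (Set.Ioo (0:ℝ) 1)) := by
    apply Measurable.aestronglyMeasurable
    exact (((hm1.mul hg1m).sub (hm2.mul hg2m)).pow measurable_const).div measurable_id
  have hfint : IntegrableOn f (Set.Ioo 0 1) := by
    apply Integrable.mono' hBint hfmeas
    rw [ae_restrict_iff' measurableSet_Ioo]
    filter_upwards with t ht
    rw [Real.norm_eq_abs, abs_of_nonneg (hfnonneg t ht)]
    exact key t ht
  refine ⟨hfint, ?_⟩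
  calc ∫ t in Set.Ioo (0:ℝ) 1, f t ≤ ∫ t in Set.Ioo (0:ℝ) 1, B t :=
        setIntegral_mono_on hfint hBint measurableSet_Ioo key
    _ = 4 * (H₁^2 + H₂^2) * (∫ t in Set.Ioo (0:ℝ) 1, (g₁ t)^2) +
        2 * A₂^2 * ∫ t in Set.Ioo (0:ℝ) 1, (g₁ t - g₂ t)^2 / t := by
        rw [integral_add (hg1.const_mul _) (hcomp.const_mul _),
          integral_const_mul, integral_const_mul]
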